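/- Completeness of Equivalence Checking: for all programs P, Q of the language L and symbolic contexts G, R over 𝕍, if (X_∅, G, R, P) ↪↓ (G_P, R_P), (X_∅, G, R, Q) ↪↓ (G_Q, R_Q), and the symbolic outputs differ (G_P ≠ G_Q or R_P ≠ R_Q), then, assuming that for all distinct a, b ∈ 𝕍 there is a map φ : (𝕍, ⊕) → (ℝ, ⊕) with φ(a) ≠ φ(b), there exists a map φ : (𝕍, ⊕) → (ℝ, ⊕) such that whenever (φ(G), φ(R), P) ↓ (G_P', R_P') and (φ(G), φ(R), Q) ↓ (G_Q', R_Q'), one has G_P' ≠ G_Q' or R_P' ≠ R_Q'. -/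
import Mathlib


namespace Volta

/-- Statements of the language `L` of structured-CTAs.  Constants are drawn
from a type `C`, registers from `Reg`, shared-memory addresses from `Addr`,
and thread IDs from `TID`. -/
inductive Stmt (C Reg Addr TID : Type) : Type where
  | const (r : Reg) (c : C)
  | binop (r r₁ r₂ : Reg)
  | copy (r r' : Reg)
  | read (r : Reg) (g : Addr)
  | write (g : Addr) (r : Reg)
  | sync (I : Set TID)

/-- A thread program: a finite sequence of statements ending in `return`. -/
inductive ThreadProg (C Reg Addr TID : Type) : Type where
  | ret
  | seq (s : Stmt C Reg Addr TID) (T : ThreadProg C Reg Addr TID)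

/-- A configuration: shared memory `G`, register files `R`, program `P`. -/
structure Config (Val C Reg Addr TID : Type) : Type where
  G : Addr → Val
  R : TID → Reg → Val
  P : TID → ThreadProg C Reg Addr TID

/-- Memory-event contexts: for each address, per reader the set of threads
that have not synchronized with that read, and the last writer together with
the set of threads that have not synchronized with that write. -/
abbrev MemEvs (Addr TID : Type) : Type :=
  Addr → (TID → Set TID) × (TID × Set TID)

variable {Val C Reg Addr TID : Type}

/-- Thread `i` has synchronized with all readers as required. -/
def noRacingRd (i : TID) (rd : TID → Set TID) : Prop :=
  ∀ j, i = j ∨ i ∉ rd j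

/-- Thread `i` is, or has synchronized with, the last writer as required. -/
def noRacingWr (i : TID) (wr : TID × Set TID) : Prop :=
  i = wr.1 ∨ i ∉ wr.2

open Classical in
/-- `sync I` removes `I` from the recorded unsynchronized sets belonging to
threads of `I`. -/
noncomputable def syncMem (I : Set TID) (X : MemEvs Addr TID) : MemEvs Addr TID :=
  fun g =>
    (fun i => if i ∈ I then (X g).1 i \ I else (X g).1 i,
     if (X g).2.1 ∈ I then ((X g).2.1, (X g).2.2 \ I) else (X g).2)

/-- The initial memory-event context `X_∅`, whose recorded unsynchronized sets
are all empty (the choice of the recorded "last writer" `t₀` is arbitrary). -/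
def emptyMemEvs (t₀ : TID) : MemEvs Addr TID :=
  fun _ => (fun _ => (∅ : Set TID), (t₀, (∅ : Set TID)))

section Dynamics

variable [DecidableEq Reg] [DecidableEq Addr] [DecidableEq TID]
variable (op : Val → Val → Val) (κ : C → Val)

/-- Thread-level unchecked small-step relation. -/
inductive TStep :
    (Addr → Val) → (Reg → Val) → ThreadProg C Reg Addr TID →
    (Addr → Val) → (Reg → Val) → ThreadProg C Reg Addr TID → Prop where
  | const {G : Addr → Val} {R : Reg → Val} {r : Reg} {c : C} {T} :
      TStep G R (.seq (.const r c) T) G (Function.update R r (κ c)) T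
  | binop {G : Addr → Val} {R : Reg → Val} {r r₁ r₂ : Reg} {T} :
      TStep G R (.seq (.binop r r₁ r₂) T) G (Function.update R r (op (R r₁) (R r₂))) T
  | copy {G : Addr → Val} {R : Reg → Val} {r r' : Reg} {T} :
      TStep G R (.seq (.copy r r') T) G (Function.update R r (R r')) T
  | read {G : Addr → Val} {R : Reg → Val} {r : Reg} {g : Addr} {T} :
      TStep G R (.seq (.read r g) T) G (Function.update R r (G g)) T
  | write {G : Addr → Val} {R : Reg → Val} {g : Addr} {r : Reg} {T} :
      TStep G R (.seq (.write g r) T) (Function.update G g (R r)) R T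

/-- Top-level unchecked small-step relation `→`:
rule `Schd` advances any single thread not blocked at a `sync`, and rule
`Sync`, when every thread of `I` is either at `sync I` or at `return`,
simultaneously advances all threads of `I` past their `sync`. -/
inductive Step : Config Val C Reg Addr TID → Config Val C Reg Addr TID → Prop where
  | schd {c : Config Val C Reg Addr TID} {i : TID} {G' : Addr → Val}
      {R' : Reg → Val} {T' : ThreadProg C Reg Addr TID} :
      TStep op κ c.G (c.R i) (c.P i) G' R' T' →
      Step c ⟨G', Function.update c.R i R', Function.update c.P i T'⟩
  | sync {c : Config Val C Reg Addr TID} {I : Set TID}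
      {P' : TID → ThreadProg C Reg Addr TID} :
      (∀ i ∉ I, P' i = c.P i) →
      (∀ i ∈ I, (c.P i = .ret ∧ P' i = .ret) ∨
        ∃ T, c.P i = .seq (.sync I) T ∧ P' i = T) →
      Step c ⟨c.G, c.R, P'⟩

/-- `→*`: reflexive-transitive closure of the unchecked step relation. -/
def Steps : Config Val C Reg Addr TID → Config Val C Reg Addr TID → Prop :=
  Relation.ReflTransGen (Step op κ)

/-- Result of a checked thread-level step: a new configuration or the error `⊥`. -/
inductive CTRes (Val C Reg Addr TID : Type) : Type where
  | ok (X : MemEvs Addr TID) (G : Addr → Val) (R : Reg → Val)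
      (T : ThreadProg C Reg Addr TID)
  | err

/-- Thread-level checked small-step relation `↪ᵢ`: a read by thread `i`
updates the reader entry of `i` to the set of all TIDs and requires
`noRacingWr`; a write by `i` requires both `noRacingRd` and `noRacingWr` and
sets the writer record to `(i, univ)`; a read or write whose side condition
fails steps to the error `⊥`. -/
inductive CTStep (i : TID) :
    MemEvs Addr TID → (Addr → Val) → (Reg → Val) → ThreadProg C Reg Addr TID →
    CTRes Val C Reg Addr TID → Prop where
  | const {X : MemEvs Addr TID} {G : Addr → Val} {R : Reg → Val} {r : Reg} {c : C} {T} :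
      CTStep i X G R (.seq (.const r c) T) (.ok X G (Function.update R r (κ c)) T)
  | binop {X : MemEvs Addr TID} {G : Addr → Val} {R : Reg → Val} {r r₁ r₂ : Reg} {T} :
      CTStep i X G R (.seq (.binop r r₁ r₂) T)
        (.ok X G (Function.update R r (op (R r₁) (R r₂))) T)
  | copy {X : MemEvs Addr TID} {G : Addr → Val} {R : Reg → Val} {r r' : Reg} {T} :
      CTStep i X G R (.seq (.copy r r') T) (.ok X G (Function.update R r (R r')) T)
  | read {X : MemEvs Addr TID} {G : Addr → Val} {R : Reg → Val} {r : Reg} {g : Addr} {T}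
      (hw : noRacingWr i (X g).2) :
      CTStep i X G R (.seq (.read r g) T)
        (.ok (Function.update X g (Function.update (X g).1 i (Set.univ : Set TID), (X g).2))
          G (Function.update R r (G g)) T)
  | write {X : MemEvs Addr TID} {G : Addr → Val} {R : Reg → Val} {g : Addr} {r : Reg} {T}
      (hr : noRacingRd i (X g).1) (hw : noRacingWr i (X g).2) :
      CTStep i X G R (.seq (.write g r) T)
        (.ok (Function.update X g ((X g).1, (i, (Set.univ : Set TID))))
          (Function.update G g (R r)) R T)
  | readBad {X : MemEvs Addr TID} {G : Addr → Val} {R : Reg → Val} {r : Reg} {g : Addr} {T}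
      (hw : ¬ noRacingWr i (X g).2) :
      CTStep i X G R (.seq (.read r g) T) .err
  | writeBad {X : MemEvs Addr TID} {G : Addr → Val} {R : Reg → Val} {g : Addr} {r : Reg} {T}
      (hbad : ¬ noRacingRd i (X g).1 ∨ ¬ noRacingWr i (X g).2) :
      CTStep i X G R (.seq (.write g r) T) .err

/-- A checked configuration: a tuple `(X, G, R, P)` or the error `⊥`. -/
inductive CConfig (Val C Reg Addr TID : Type) : Type where
  | ok (X : MemEvs Addr TID) (c : Config Val C Reg Addr TID)
  | err

/-- Top-level checked small-step relation `↪`. -/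
inductive CStep : CConfig Val C Reg Addr TID → CConfig Val C Reg Addr TID → Prop where
  | schd {X : MemEvs Addr TID} {c : Config Val C Reg Addr TID} {i : TID}
      {X' : MemEvs Addr TID} {G' : Addr → Val} {R' : Reg → Val}
      {T' : ThreadProg C Reg Addr TID} :
      CTStep op κ i X c.G (c.R i) (c.P i) (.ok X' G' R' T') →
      CStep (.ok X c) (.ok X' ⟨G', Function.update c.R i R', Function.update c.P i T'⟩)
  | schdBad {X : MemEvs Addr TID} {c : Config Val C Reg Addr TID} {i : TID} :
      CTStep op κ i X c.G (c.R i) (c.P i) .err →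
      CStep (.ok X c) .err
  | sync {X : MemEvs Addr TID} {c : Config Val C Reg Addr TID} {I : Set TID}
      {P' : TID → ThreadProg C Reg Addr TID} :
      (∀ i ∉ I, P' i = c.P i) →
      (∀ i ∈ I, (c.P i = .ret ∧ P' i = .ret) ∨
        ∃ T, c.P i = .seq (.sync I) T ∧ P' i = T) →
      CStep (.ok X c) (.ok (syncMem I X) ⟨c.G, c.R, P'⟩)

/-- `↪*`: reflexive-transitive closure of the checked step relation. -/
def CSteps : CConfig Val C Reg Addr TID → CConfig Val C Reg Addr TID → Prop :=
  Relation.ReflTransGen (CStep op κ)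

/-- A memory access (an unchecked `Schd` step that is a read (`w = false`)
or write (`w = true`) by thread `i` to address `g`). -/
inductive AccStep (i : TID) (g : Addr) :
    Bool → Config Val C Reg Addr TID → Config Val C Reg Addr TID → Prop where
  | read {c : Config Val C Reg Addr TID} {r : Reg} {T : ThreadProg C Reg Addr TID}
      (h : c.P i = .seq (.read r g) T) :
      AccStep i g false c
        ⟨c.G, Function.update c.R i (Function.update (c.R i) r (c.G g)),
          Function.update c.P i T⟩
  | write {c : Config Val C Reg Addr TID} {r : Reg} {T : ThreadProg C Reg Addr TID}
      (h : c.P i = .seq (.write g r) T) :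
      AccStep i g true c
        ⟨Function.update c.G g (c.R i r), c.R, Function.update c.P i T⟩

/-- `P` has a data race: there are two memory accesses by distinct threads to
the same address, at least one a write, and two unchecked traces with a common
prefix after which the first access immediately precedes the second in one
trace and vice versa in the other. -/
def HasDataRace (P : TID → ThreadProg C Reg Addr TID) : Prop :=
  ∃ (G₀ : Addr → Val) (R₀ : TID → Reg → Val)
    (c c₁ c₁' c₂ c₂' : Config Val C Reg Addr TID)
    (i j : TID) (g : Addr) (wi wj : Bool),
    i ≠ j ∧ (wi = true ∨ wj = true) ∧
    Steps op κ ⟨G₀, R₀, P⟩ c ∧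
    AccStep i g wi c c₁ ∧ AccStep j g wj c₁ c₁' ∧
    AccStep j g wj c c₂ ∧ AccStep i g wi c₂ c₂'

/-- `(G, R, P) ↓ (G', R')`: the unchecked dynamics reaches a configuration
with every thread at `return`, with final shared memory `G'` and registers `R'`. -/
def Terminates (c : Config Val C Reg Addr TID)
    (G' : Addr → Val) (R' : TID → Reg → Val) : Prop :=
  ∃ P', Steps op κ c ⟨G', R', P'⟩ ∧ ∀ i, P' i = ThreadProg.ret

/-- `(X, G, R, P) ↪↓ (G', R')`: the checked dynamics reaches a configuration
with every thread at `return`, with final shared memory `G'` and registers `R'`. -/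
def CTerminates (X : MemEvs Addr TID) (c : Config Val C Reg Addr TID)
    (G' : Addr → Val) (R' : TID → Reg → Val) : Prop :=
  ∃ X' P', CSteps op κ (.ok X c) (.ok X' ⟨G', R', P'⟩) ∧ ∀ i, P' i = ThreadProg.ret

end Dynamics

end Volta

namespace Volta

set_option linter.unusedSectionVars false

section Aux

variable {Val C Reg Addr TID : Type}
variable [DecidableEq Reg] [DecidableEq Addr] [DecidableEq TID]
variable (op : Val → Val → Val) (κ : C → Val)

lemma csteps_err {t : CConfig Val C Reg Addr TID} (h : CSteps op κ .err t) : t = .err := by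
  induction h with
  | refl => rfl
  | tail _ step ih => subst ih; cases step

lemma ctstep_det {i : TID} {X : MemEvs Addr TID} {G : Addr → Val} {R : Reg → Val}
    {T : ThreadProg C Reg Addr TID} {X₁ X₂ G₁ G₂ R₁ R₂ T₁ T₂}
    (h1 : CTStep op κ i X G R T (.ok X₁ G₁ R₁ T₁))
    (h2 : CTStep op κ i X G R T (.ok X₂ G₂ R₂ T₂)) :
    X₁ = X₂ ∧ G₁ = G₂ ∧ R₁ = R₂ ∧ T₁ = T₂ := by
  cases h1 <;> cases h2 <;> simp_all

lemma syncMem_comm (I J : Set TID) (X : MemEvs Addr TID) :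
    syncMem I (syncMem J X) = syncMem J (syncMem I X) := by
  funext g
  refine Prod.ext ?_ ?_
  · funext k
    simp only [syncMem]
    by_cases hI : k ∈ I <;> by_cases hJ : k ∈ J <;>
      simp [hI, hJ, Set.diff_diff, Set.union_comm]
  · simp only [syncMem]
    by_cases hI : (X g).2.1 ∈ I <;> by_cases hJ : (X g).2.1 ∈ J <;>
      simp [hI, hJ, Set.diff_diff, Set.union_comm]

lemma noRacingWr_of_sync {i : TID} {J : Set TID} {X : MemEvs Addr TID} {g : Addr}
    (hiJ : i ∉ J) (h : noRacingWr i ((syncMem J X g).2)) : noRacingWr i ((X g).2) := by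
  classical
  simp only [syncMem] at h
  split at h
  · rcases h with h | h
    · exact Or.inl h
    · refine Or.inr fun hm => h ⟨hm, hiJ⟩
  · exact h

lemma noRacingWr_sync {i : TID} {J : Set TID} {X : MemEvs Addr TID} {g : Addr}
    (h : noRacingWr i ((X g).2)) : noRacingWr i ((syncMem J X g).2) := by
  classical
  simp only [syncMem]
  split
  · rcases h with h | h
    · exact Or.inl h
    · exact Or.inr fun hm => h hm.1
  · exact h

lemma noRacingRd_of_sync {i : TID} {J : Set TID} {X : MemEvs Addr TID} {g : Addr}
    (hiJ : i ∉ J) (h : noRacingRd i ((syncMem J X g).1)) : noRacingRd i ((X g).1) := by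
  classical
  intro j
  rcases h j with h | h
  · exact Or.inl h
  · simp only [syncMem] at h
    split at h
    · exact Or.inr fun hm => h ⟨hm, hiJ⟩
    · exact Or.inr h

lemma noRacingRd_sync {i : TID} {J : Set TID} {X : MemEvs Addr TID} {g : Addr}
    (h : noRacingRd i ((X g).1)) : noRacingRd i ((syncMem J X g).1) := by
  classical
  intro j
  rcases h j with h | h
  · exact Or.inl h
  · simp only [syncMem]
    split
    · exact Or.inr fun hm => h hm.1
    · exact Or.inr h

end Aux
end Volta
namespace Volta

set_option linter.unusedSectionVars false

section Aux2

variable {Val C Reg Addr TID : Type}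
variable [DecidableEq Reg] [DecidableEq Addr] [DecidableEq TID]
variable (op : Val → Val → Val) (κ : C → Val)

open Classical in
noncomputable def syncPair (J : Set TID) (p : (TID → Set TID) × (TID × Set TID)) :
    (TID → Set TID) × (TID × Set TID) :=
  (fun k => if k ∈ J then p.1 k \ J else p.1 k,
   if p.2.1 ∈ J then (p.2.1, p.2.2 \ J) else p.2)

lemma syncMem_eq (J : Set TID) (X : MemEvs Addr TID) :
    syncMem J X = fun a => syncPair J (X a) := rfl

lemma syncMem_update (J : Set TID) (X : MemEvs Addr TID) (g : Addr)
    (p : (TID → Set TID) × (TID × Set TID)) :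
    syncMem J (Function.update X g p) = Function.update (syncMem J X) g (syncPair J p) := by
  funext a
  by_cases ha : a = g
  · subst ha; simp [syncMem_eq, Function.update]
  · simp [syncMem_eq, Function.update, ha]

lemma syncPair_read {j : TID} {J : Set TID} (hj : j ∉ J)
    (p : (TID → Set TID) × (TID × Set TID)) :
    syncPair J (Function.update p.1 j Set.univ, p.2) =
      (Function.update ((syncPair J p).1) j Set.univ, (syncPair J p).2) := by
  classical
  refine Prod.ext ?_ rfl
  funext k
  by_cases hk : k = j
  · subst hk; simp [syncPair, Function.update, hj]
  · by_cases hkJ : k ∈ J <;> simp [syncPair, Function.update, hk, hkJ]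

lemma syncPair_write {j : TID} {J : Set TID} (hj : j ∉ J)
    (p : (TID → Set TID) × (TID × Set TID)) :
    syncPair J (p.1, (j, Set.univ)) = ((syncPair J p).1, (j, Set.univ)) := by
  classical
  refine Prod.ext rfl ?_
  simp [syncPair, hj]

lemma ctstep_sync_comm {j : TID} {J : Set TID} (hj : j ∉ J)
    {X : MemEvs Addr TID} {G : Addr → Val} {R : Reg → Val}
    {T : ThreadProg C Reg Addr TID} {X₁ G₁ R₁ T₁}
    (ct : CTStep op κ j X G R T (.ok X₁ G₁ R₁ T₁)) :
    CTStep op κ j (syncMem J X) G R T (.ok (syncMem J X₁) G₁ R₁ T₁) := by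
  cases ct with
  | const => exact CTStep.const
  | binop => exact CTStep.binop
  | copy => exact CTStep.copy
  | @read r g T hw =>
      have hX : syncMem J (Function.update X g
          (Function.update (X g).1 j Set.univ, (X g).2)) =
          Function.update (syncMem J X) g
            (Function.update ((syncMem J X) g).1 j Set.univ, ((syncMem J X) g).2) := by
        rw [syncMem_update, syncPair_read hj]
        rfl
      rw [hX]
      exact CTStep.read (noRacingWr_sync hw)
  | @write g r T hr hw =>
      have hX : syncMem J (Function.update X g ((X g).1, (j, Set.univ))) =
          Function.update (syncMem J X) g (((syncMem J X) g).1, (j, Set.univ)) := by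
        rw [syncMem_update, syncPair_write hj]
        rfl
      rw [hX]
      exact CTStep.write (noRacingRd_sync hr) (noRacingWr_sync hw)

end Aux2
end Volta
namespace Volta

set_option linter.unusedSectionVars false
set_option maxHeartbeats 1000000

section Aux3

variable {Val C Reg Addr TID : Type}
variable [DecidableEq Reg] [DecidableEq Addr] [DecidableEq TID]
variable (op : Val → Val → Val) (κ : C → Val)

/-- Head of a thread program is a read at `g`. -/
def RdAt (T : ThreadProg C Reg Addr TID) (g : Addr) : Prop :=
  ∃ r T', T = .seq (.read r g) T'

/-- Head of a thread program is a write at `g`. -/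
def WrAt (T : ThreadProg C Reg Addr TID) (g : Addr) : Prop :=
  ∃ r T', T = .seq (.write g r) T'

lemma keyF {Xf : MemEvs Addr TID} {cf : Config Val C Reg Addr TID}
    (hret : ∀ i, cf.P i = .ret) :
    ∀ {s}, CSteps op κ s (.ok Xf cf) → ∀ X c, s = .ok X c →
    ∀ i g, (RdAt (c.P i) g ∨ WrAt (c.P i) g → noRacingWr i ((X g).2)) ∧
           (WrAt (c.P i) g → noRacingRd i ((X g).1)) := by
  intro s h
  induction h using Relation.ReflTransGen.head_induction_on with
  | refl =>
      intro X c heq i g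
      cases heq
      constructor
      · rintro (⟨r, T', hT⟩ | ⟨r, T', hT⟩) <;> rw [hret i] at hT <;> exact absurd hT (by simp)
      · rintro ⟨r, T', hT⟩; rw [hret i] at hT; exact absurd hT (by simp)
  | head step tail ih =>
      intro X c heq i g
      subst heq
      cases step with
      | schdBad ct => exact absurd (csteps_err op κ tail) (by simp)
      | @schd _ _ j X₁ G₁ R₁ T₁ ct =>
          by_cases hij : i = j
          · subst hij
            constructor
            · rintro (⟨r, T', hT⟩ | ⟨r, T', hT⟩) <;> rw [hT] at ct <;> cases ct <;> assumption
            · rintro ⟨r, T', hT⟩; rw [hT] at ct; cases ct; assumption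
          · have ihi := ih X₁ ⟨G₁, Function.update c.R j R₁, Function.update c.P j T₁⟩ rfl i g
            simp only [Function.update_of_ne hij] at ihi
            generalize hPj : c.P j = Tj at ct
            cases ct with
            | const => exact ihi
            | binop => exact ihi
            | copy => exact ihi
            | @read r h T hw =>
                by_cases hg : g = h
                · subst hg
                  simp only [Function.update_self] at ihi
                  constructor
                  · intro hacc
                    exact ihi.1 hacc
                  · intro hw'
                    rcases ihi.2 hw' j with h2 | h2
                    · exact absurd h2 hij
                    · simp at h2
                · simpa only [Function.update_of_ne hg] using ihi
            | @write h r T hr hw =>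
                by_cases hg : g = h
                · subst hg
                  simp only [Function.update_self] at ihi
                  constructor
                  · intro hacc
                    rcases ihi.1 hacc with h2 | h2
                    · exact absurd h2 hij
                    · simp at h2
                  · intro hw'
                    rcases ihi.1 (Or.inr hw') with h2 | h2
                    · exact absurd h2 hij
                    · simp at h2
                · simpa only [Function.update_of_ne hg] using ihi
      | @sync _ _ I P' h1 h2 =>
          have key : (RdAt (c.P i) g ∨ WrAt (c.P i) g) → i ∉ I := by
            rintro hacc hiI
            rcases h2 i hiI with ⟨hP, _⟩ | ⟨T, hP, _⟩ <;>
              rcases hacc with ⟨r, T', hT⟩ | ⟨r, T', hT⟩ <;> rw [hP] at hT <;>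
                simp at hT
          have ihi := ih (syncMem I X) ⟨c.G, c.R, P'⟩ rfl i g
          constructor
          · intro hacc
            have hni := key hacc
            have hPi : P' i = c.P i := h1 i hni
            simp only [hPi] at ihi
            exact noRacingWr_of_sync hni (ihi.1 hacc)
          · intro hw'
            have hni := key (Or.inr hw')
            have hPi : P' i = c.P i := h1 i hni
            simp only [hPi] at ihi
            exact noRacingRd_of_sync hni (ihi.2 hw')

end Aux3
end Volta
namespace Volta

set_option linter.unusedSectionVars false
set_option maxHeartbeats 1000000

section Aux4

variable {Val C Reg Addr TID : Type}
variable [DecidableEq Reg] [DecidableEq Addr] [DecidableEq TID]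

/-- The memory-event update performed by a read. -/
def updRd (X : MemEvs Addr TID) (g : Addr) (i : TID) : MemEvs Addr TID :=
  Function.update X g (Function.update (X g).1 i Set.univ, (X g).2)

/-- The memory-event update performed by a write. -/
def updWr (X : MemEvs Addr TID) (g : Addr) (i : TID) : MemEvs Addr TID :=
  Function.update X g ((X g).1, (i, Set.univ))

lemma updRd_ne {a g : Addr} (h : a ≠ g) (X : MemEvs Addr TID) (i : TID) :
    updRd X g i a = X a := Function.update_of_ne h _ _

lemma updWr_ne {a g : Addr} (h : a ≠ g) (X : MemEvs Addr TID) (i : TID) :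
    updWr X g i a = X a := Function.update_of_ne h _ _

lemma updRd_snd (X : MemEvs Addr TID) (g : Addr) (i : TID) (a : Addr) :
    (updRd X g i a).2 = (X a).2 := by
  by_cases h : a = g
  · subst h; simp [updRd]
  · rw [updRd_ne h]

lemma updRd_same_fst (X : MemEvs Addr TID) (g : Addr) (i : TID) :
    (updRd X g i g).1 = Function.update (X g).1 i Set.univ := by simp [updRd]

lemma updWr_same_snd (X : MemEvs Addr TID) (g : Addr) (i : TID) :
    (updWr X g i g).2 = (i, Set.univ) := by simp [updWr]

lemma updWr_same_fst (X : MemEvs Addr TID) (g : Addr) (i : TID) :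
    (updWr X g i g).1 = (X g).1 := by simp [updWr]

lemma rdrd_comm {i j : TID} (hij : i ≠ j) (X : MemEvs Addr TID) (g h : Addr) :
    updRd (updRd X h j) g i = updRd (updRd X g i) h j := by
  by_cases hgh : g = h
  · subst hgh
    funext a
    by_cases ha : a = g
    · subst ha
      simp only [updRd, Function.update_self]
      exact congrArg (·, (X a).2) (Function.update_comm (Ne.symm hij) _ _ _)
    · simp only [updRd, Function.update_of_ne ha]
  · funext a
    by_cases hag : a = g
    · subst hag
      simp only [updRd, Function.update_self, Function.update_of_ne hgh,
        Function.update_of_ne (Ne.symm hgh)]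
    · by_cases hah : a = h
      · subst hah
        simp only [updRd, Function.update_self, Function.update_of_ne hag,
          Function.update_of_ne (Ne.symm hgh)]
      · simp only [updRd, Function.update_of_ne hag, Function.update_of_ne hah]

lemma rdwr_comm {i j : TID} (hgh : g ≠ h) (X : MemEvs Addr TID) :
    updRd (updWr X h j) g i = updWr (updRd X g i) h j := by
  funext a
  by_cases hag : a = g
  · subst hag
    simp only [updRd, updWr, Function.update_self, Function.update_of_ne hgh,
      Function.update_of_ne (Ne.symm hgh)]
  · by_cases hah : a = h
    · subst hah
      simp only [updRd, updWr, Function.update_self, Function.update_of_ne hag,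
        Function.update_of_ne (Ne.symm hgh)]
    · simp only [updRd, updWr, Function.update_of_ne hag, Function.update_of_ne hah]

lemma wrwr_comm {i j : TID} (hgh : g ≠ h) (X : MemEvs Addr TID) :
    updWr (updWr X h j) g i = updWr (updWr X g i) h j := by
  funext a
  by_cases hag : a = g
  · subst hag
    simp only [updWr, Function.update_self, Function.update_of_ne hgh,
      Function.update_of_ne (Ne.symm hgh)]
  · by_cases hah : a = h
    · subst hah
      simp only [updWr, Function.update_self, Function.update_of_ne hag,
        Function.update_of_ne (Ne.symm hgh)]
    · simp only [updWr, Function.update_of_ne hag, Function.update_of_ne hah]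

end Aux4
end Volta
namespace Volta

set_option linter.unusedSectionVars false
set_option maxHeartbeats 1000000

section Aux5

variable {Val C Reg Addr TID : Type}
variable [DecidableEq Reg] [DecidableEq Addr] [DecidableEq TID]
variable (op : Val → Val → Val) (κ : C → Val)

/-- Two checked thread steps of distinct threads from a common state commute,
given the race-freedom conditions for thread `i` after thread `j`'s step. -/
lemma swap_schd {i j : TID} (hij : i ≠ j)
    {X : MemEvs Addr TID} {G : Addr → Val} {Ri Rj : Reg → Val}
    {Ti Tj : ThreadProg C Reg Addr TID}
    {X₁ G₁ Rj' Tj'} (ct : CTStep op κ j X G Rj Tj (.ok X₁ G₁ Rj' Tj'))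
    {X'' G'' Ri' Ti'} (ct' : CTStep op κ i X G Ri Ti (.ok X'' G'' Ri' Ti'))
    (Fw : ∀ g, (RdAt Ti g ∨ WrAt Ti g) → noRacingWr i ((X₁ g).2))
    (Fr : ∀ g, WrAt Ti g → noRacingRd i ((X₁ g).1)) :
    ∃ X₂ G₂, CTStep op κ i X₁ G₁ Ri Ti (.ok X₂ G₂ Ri' Ti') ∧
             CTStep op κ j X'' G'' Rj Tj (.ok X₂ G₂ Rj' Tj') := by
  cases ct' with
  | const =>
      cases ct with
      | const => exact ⟨_, _, CTStep.const, CTStep.const⟩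
      | binop => exact ⟨_, _, CTStep.const, CTStep.binop⟩
      | copy => exact ⟨_, _, CTStep.const, CTStep.copy⟩
      | read hw => exact ⟨_, _, CTStep.const, CTStep.read hw⟩
      | write hr hw => exact ⟨_, _, CTStep.const, CTStep.write hr hw⟩
  | binop =>
      cases ct with
      | const => exact ⟨_, _, CTStep.binop, CTStep.const⟩
      | binop => exact ⟨_, _, CTStep.binop, CTStep.binop⟩
      | copy => exact ⟨_, _, CTStep.binop, CTStep.copy⟩
      | read hw => exact ⟨_, _, CTStep.binop, CTStep.read hw⟩
      | write hr hw => exact ⟨_, _, CTStep.binop, CTStep.write hr hw⟩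
  | copy =>
      cases ct with
      | const => exact ⟨_, _, CTStep.copy, CTStep.const⟩
      | binop => exact ⟨_, _, CTStep.copy, CTStep.binop⟩
      | copy => exact ⟨_, _, CTStep.copy, CTStep.copy⟩
      | read hw => exact ⟨_, _, CTStep.copy, CTStep.read hw⟩
      | write hr hw => exact ⟨_, _, CTStep.copy, CTStep.write hr hw⟩
  | @read r g Ti' hw =>
      cases ct with
      | const => exact ⟨_, _, CTStep.read hw, CTStep.const⟩
      | binop => exact ⟨_, _, CTStep.read hw, CTStep.binop⟩
      | copy => exact ⟨_, _, CTStep.read hw, CTStep.copy⟩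
      | @read r₂ h Tj' hw₂ =>
          -- both reads
          have hw₁ : noRacingWr i ((updRd X h j g).2) := by rw [updRd_snd]; exact hw
          have hw₂' : noRacingWr j ((updRd X g i h).2) := by rw [updRd_snd]; exact hw₂
          have S1 : CTStep op κ i (updRd X h j) G Ri (.seq (.read r g) Ti')
              (.ok (updRd (updRd X h j) g i) G (Function.update Ri r (G g)) Ti') :=
            CTStep.read hw₁
          have S2 : CTStep op κ j (updRd X g i) G Rj (.seq (.read r₂ h) Tj')
              (.ok (updRd (updRd X g i) h j) G (Function.update Rj r₂ (G h)) Tj') :=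
            CTStep.read hw₂'
          exact ⟨_, _, S1, (rdrd_comm hij X g h) ▸ S2⟩
      | @write h r₂ Tj' hr₂ hw₂ =>
          -- i reads g, j writes h
          by_cases hgh : g = h
          · subst hgh
            exfalso
            have := Fw g (Or.inl ⟨r, Ti', rfl⟩)
            rw [Function.update_self] at this
            rcases this with h' | h'
            · exact hij h'
            · exact h' (Set.mem_univ i)
          · have hw₁ : noRacingWr i ((updWr X h j g).2) := by
              rw [updWr_ne hgh]; exact hw
            have hGg : Function.update G h (Rj r₂) g = G g := Function.update_of_ne hgh _ _
            have S1 : CTStep op κ i (updWr X h j) (Function.update G h (Rj r₂)) Ri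
                (.seq (.read r g) Ti')
                (.ok (updRd (updWr X h j) g i) (Function.update G h (Rj r₂))
                  (Function.update Ri r (G g)) Ti') := by
              rw [← hGg]; exact CTStep.read hw₁
            have hr₂' : noRacingRd j ((updRd X g i h).1) := by
              rw [updRd_ne (Ne.symm hgh)]; exact hr₂
            have hw₂' : noRacingWr j ((updRd X g i h).2) := by rw [updRd_snd]; exact hw₂
            have S2 : CTStep op κ j (updRd X g i) G Rj (.seq (.write h r₂) Tj')
                (.ok (updWr (updRd X g i) h j) (Function.update G h (Rj r₂)) Rj Tj') :=
              CTStep.write hr₂' hw₂'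
            exact ⟨_, _, S1, (rdwr_comm hgh X) ▸ S2⟩
  | @write g r Ti' hr hw =>
      cases ct with
      | const => exact ⟨_, _, CTStep.write hr hw, CTStep.const⟩
      | binop => exact ⟨_, _, CTStep.write hr hw, CTStep.binop⟩
      | copy => exact ⟨_, _, CTStep.write hr hw, CTStep.copy⟩
      | @read r₂ h Tj' hw₂ =>
          -- i writes g, j reads h
          by_cases hgh : g = h
          · subst hgh
            exfalso
            have := Fr g ⟨r, Ti', rfl⟩ j
            rw [Function.update_self] at this
            rcases this with h' | h'
            · exact hij h'
            · simp at h'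
          · have hr₁ : noRacingRd i ((updRd X h j g).1) := by
              rw [updRd_ne hgh]; exact hr
            have hw₁ : noRacingWr i ((updRd X h j g).2) := by rw [updRd_snd]; exact hw
            have S1 : CTStep op κ i (updRd X h j) G Ri (.seq (.write g r) Ti')
                (.ok (updWr (updRd X h j) g i) (Function.update G g (Ri r)) Ri Ti') :=
              CTStep.write hr₁ hw₁
            have hw₂' : noRacingWr j ((updWr X g i h).2) := by
              rw [updWr_ne (Ne.symm hgh)]; exact hw₂
            have hGh : Function.update G g (Ri r) h = G h :=
              Function.update_of_ne (Ne.symm hgh) _ _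
            have S2 : CTStep op κ j (updWr X g i) (Function.update G g (Ri r)) Rj
                (.seq (.read r₂ h) Tj')
                (.ok (updRd (updWr X g i) h j) (Function.update G g (Ri r))
                  (Function.update Rj r₂ (G h)) Tj') := by
              rw [← hGh]; exact CTStep.read hw₂'
            exact ⟨_, _, S1, (rdwr_comm (Ne.symm hgh) X).symm ▸ S2⟩
      | @write h r₂ Tj' hr₂ hw₂ =>
          -- both write
          by_cases hgh : g = h
          · subst hgh
            exfalso
            have := Fw g (Or.inr ⟨r, Ti', rfl⟩)
            rw [Function.update_self] at this
            rcases this with h' | h'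
            · exact hij h'
            · exact h' (Set.mem_univ i)
          · have hr₁ : noRacingRd i ((updWr X h j g).1) := by
              rw [updWr_ne hgh]; exact hr
            have hw₁ : noRacingWr i ((updWr X h j g).2) := by
              rw [updWr_ne hgh]; exact hw
            have S1 : CTStep op κ i (updWr X h j) (Function.update G h (Rj r₂)) Ri
                (.seq (.write g r) Ti')
                (.ok (updWr (updWr X h j) g i)
                  (Function.update (Function.update G h (Rj r₂)) g (Ri r)) Ri Ti') :=
              CTStep.write hr₁ hw₁
            have hr₂' : noRacingRd j ((updWr X g i h).1) := by
              rw [updWr_ne (Ne.symm hgh)]; exact hr₂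
            have hw₂' : noRacingWr j ((updWr X g i h).2) := by
              rw [updWr_ne (Ne.symm hgh)]; exact hw₂
            have S2 : CTStep op κ j (updWr X g i) (Function.update G g (Ri r)) Rj
                (.seq (.write h r₂) Tj')
                (.ok (updWr (updWr X g i) h j)
                  (Function.update (Function.update G g (Ri r)) h (Rj r₂)) Rj Tj') :=
              CTStep.write hr₂' hw₂'
            have EX : updWr (updWr X h j) g i = updWr (updWr X g i) h j := wrwr_comm hgh X
            have EG : Function.update (Function.update G h (Rj r₂)) g (Ri r) =
                Function.update (Function.update G g (Ri r)) h (Rj r₂) :=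
              Function.update_comm (Ne.symm hgh) _ _ _
            rw [← EX, ← EG] at S2
            exact ⟨_, _, S1, S2⟩

end Aux5
end Volta
namespace Volta

set_option linter.unusedSectionVars false
set_option maxHeartbeats 4000000

section Aux6

variable {Val C Reg Addr TID : Type}
variable [DecidableEq Reg] [DecidableEq Addr] [DecidableEq TID]
variable (op : Val → Val → Val) (κ : C → Val)

lemma cstep_good {Gf : Addr → Val} {Rf : TID → Reg → Val} {Xf : MemEvs Addr TID}
    {Pf : TID → ThreadProg C Reg Addr TID} (hret : ∀ i, Pf i = .ret) :
    ∀ {s}, CSteps op κ s (.ok Xf ⟨Gf, Rf, Pf⟩) →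
    ∀ X c X' c', s = .ok X c → CStep op κ (.ok X c) (.ok X' c') →
    ∃ Xf' Pf', CSteps op κ (.ok X' c') (.ok Xf' ⟨Gf, Rf, Pf'⟩) ∧ ∀ i, Pf' i = .ret := by
  intro s h
  induction h using Relation.ReflTransGen.head_induction_on with
  | refl =>
      intro X c X' c' heq snew
      cases heq
      cases snew with
      | @schd _ _ i X' Gi Ri' Ti' ct =>
          have ct2 : CTStep op κ i Xf Gf (Rf i) (Pf i) (.ok X' Gi Ri' Ti') := ct
          rw [hret i] at ct2
          cases ct2
      | @sync _ _ J Q hq1 hq2 =>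
          refine ⟨syncMem J Xf, Q, Relation.ReflTransGen.refl, ?_⟩
          intro k
          by_cases hk : k ∈ J
          · rcases hq2 k hk with ⟨_, e⟩ | ⟨T, hT, _⟩
            · exact e
            · have hT2 : Pf k = ThreadProg.seq (Stmt.sync J) T := hT
              rw [hret k] at hT2
              cases hT2
          · exact (hq1 k hk).trans (hret k)
  | head step tail ih =>
      intro X c X' c' heq snew
      subst heq
      cases step with
      | schdBad ct => exact absurd (csteps_err op κ tail) (by simp)
      | @schd _ _ j X₁ Gj Rj' Tj' ct =>
          cases snew with
          | @schd _ _ i XX Gi Ri' Ti' ct' =>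
              by_cases hij : i = j
              · subst hij
                obtain ⟨e1, e2, e3, e4⟩ := ctstep_det op κ ct' ct
                subst e1; subst e2; subst e3; subst e4
                exact ⟨Xf, Pf, tail, hret⟩
              · have FF := keyF op κ hret tail X₁
                  ⟨Gj, Function.update c.R j Rj', Function.update c.P j Tj'⟩ rfl
                have hPi : Function.update c.P j Tj' i = c.P i :=
                  Function.update_of_ne hij _ _
                have Fw : ∀ g, (RdAt (c.P i) g ∨ WrAt (c.P i) g) →
                    noRacingWr i ((X₁ g).2) := by
                  intro g hacc
                  refine (FF i g).1 ?_
                  show RdAt (Function.update c.P j Tj' i) g ∨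
                    WrAt (Function.update c.P j Tj' i) g
                  rw [hPi]; exact hacc
                have Fr : ∀ g, WrAt (c.P i) g → noRacingRd i ((X₁ g).1) := by
                  intro g hacc
                  refine (FF i g).2 ?_
                  show WrAt (Function.update c.P j Tj' i) g
                  rw [hPi]; exact hacc
                obtain ⟨X₂, G₂, S1, S2⟩ := swap_schd op κ hij ct ct' Fw Fr
                have hRi : Function.update c.R j Rj' i = c.R i :=
                  Function.update_of_ne hij _ _
                have S1' : CTStep op κ i X₁ Gj (Function.update c.R j Rj' i)
                    (Function.update c.P j Tj' i) (.ok X₂ G₂ Ri' Ti') := by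
                  rw [hRi, hPi]; exact S1
                have step2 : CStep op κ
                    (.ok X₁ ⟨Gj, Function.update c.R j Rj', Function.update c.P j Tj'⟩)
                    (.ok X₂ ⟨G₂,
                      Function.update (Function.update c.R j Rj') i Ri',
                      Function.update (Function.update c.P j Tj') i Ti'⟩) :=
                  CStep.schd S1'
                obtain ⟨Xf', Pf', run2, hret2⟩ := ih X₁ _ X₂ _ rfl step2
                have hRj : Function.update c.R i Ri' j = c.R j :=
                  Function.update_of_ne (Ne.symm hij) _ _
                have hPj : Function.update c.P i Ti' j = c.P j :=
                  Function.update_of_ne (Ne.symm hij) _ _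
                have S2' : CTStep op κ j X' Gi (Function.update c.R i Ri' j)
                    (Function.update c.P i Ti' j) (.ok X₂ G₂ Rj' Tj') := by
                  rw [hRj, hPj]; exact S2
                have step1 : CStep op κ
                    (.ok X' ⟨Gi, Function.update c.R i Ri', Function.update c.P i Ti'⟩)
                    (.ok X₂ ⟨G₂,
                      Function.update (Function.update c.R i Ri') j Rj',
                      Function.update (Function.update c.P i Ti') j Tj'⟩) :=
                  CStep.schd S2'
                have hd : (⟨G₂, Function.update (Function.update c.R i Ri') j Rj',
                    Function.update (Function.update c.P i Ti') j Tj'⟩ :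
                      Config Val C Reg Addr TID) =
                    ⟨G₂, Function.update (Function.update c.R j Rj') i Ri',
                      Function.update (Function.update c.P j Tj') i Ti'⟩ := by
                  rw [Function.update_comm (Ne.symm hij), Function.update_comm (Ne.symm hij)]
                rw [hd] at step1
                exact ⟨Xf', Pf', Relation.ReflTransGen.head step1 run2, hret2⟩
          | @sync _ _ J Q hq1 hq2 =>
              have hjJ : j ∉ J := by
                intro hj
                rcases hq2 j hj with ⟨hP, _⟩ | ⟨T, hP, _⟩ <;> rw [hP] at ct <;> cases ct
              have ctS := ctstep_sync_comm op κ hjJ ct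
              have cond1 : ∀ k ∉ J, Function.update Q j Tj' k =
                  (⟨Gj, Function.update c.R j Rj', Function.update c.P j Tj'⟩ :
                    Config Val C Reg Addr TID).P k := by
                intro k hk
                by_cases hkj : k = j
                · subst hkj; simp
                · show Function.update Q j Tj' k = Function.update c.P j Tj' k
                  rw [Function.update_of_ne hkj, Function.update_of_ne hkj]
                  exact hq1 k hk
              have cond2 : ∀ k ∈ J,
                  ((⟨Gj, Function.update c.R j Rj', Function.update c.P j Tj'⟩ :
                    Config Val C Reg Addr TID).P k = .ret ∧
                      Function.update Q j Tj' k = .ret) ∨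
                  ∃ T, (⟨Gj, Function.update c.R j Rj', Function.update c.P j Tj'⟩ :
                    Config Val C Reg Addr TID).P k = .seq (.sync J) T ∧
                      Function.update Q j Tj' k = T := by
                intro k hk
                have hkj : k ≠ j := fun e => hjJ (e ▸ hk)
                show (Function.update c.P j Tj' k = .ret ∧
                    Function.update Q j Tj' k = .ret) ∨
                  ∃ T, Function.update c.P j Tj' k = .seq (.sync J) T ∧
                    Function.update Q j Tj' k = T
                rw [Function.update_of_ne hkj, Function.update_of_ne hkj]
                exact hq2 k hk
              have stepSync : CStep op κ
                  (.ok X₁ ⟨Gj, Function.update c.R j Rj', Function.update c.P j Tj'⟩)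
                  (.ok (syncMem J X₁) ⟨Gj, Function.update c.R j Rj',
                    Function.update Q j Tj'⟩) :=
                CStep.sync cond1 cond2
              obtain ⟨Xf', Pf', run2, hret2⟩ := ih X₁ _ _ _ rfl stepSync
              have hQj : Q j = c.P j := hq1 j hjJ
              have S2' : CTStep op κ j (syncMem J X) c.G (c.R j) (Q j)
                  (.ok (syncMem J X₁) Gj Rj' Tj') := by
                rw [hQj]; exact ctS
              have step1 : CStep op κ (.ok (syncMem J X) ⟨c.G, c.R, Q⟩)
                  (.ok (syncMem J X₁) ⟨Gj, Function.update c.R j Rj',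
                    Function.update Q j Tj'⟩) :=
                CStep.schd S2'
              exact ⟨Xf', Pf', Relation.ReflTransGen.head step1 run2, hret2⟩
      | @sync _ _ I P₀ h01 h02 =>
          cases snew with
          | @schd _ _ i XX Gi Ri' Ti' ct' =>
              have hiI : i ∉ I := by
                intro hi
                rcases h02 i hi with ⟨hP, _⟩ | ⟨T, hP, _⟩ <;> rw [hP] at ct' <;> cases ct'
              have ctS := ctstep_sync_comm op κ hiI ct'
              have hPi : P₀ i = c.P i := h01 i hiI
              have ctS' : CTStep op κ i (syncMem I X) c.G (c.R i) (P₀ i)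
                  (.ok (syncMem I X') Gi Ri' Ti') := by
                rw [hPi]; exact ctS
              have step2 : CStep op κ (.ok (syncMem I X) ⟨c.G, c.R, P₀⟩)
                  (.ok (syncMem I X') ⟨Gi, Function.update c.R i Ri',
                    Function.update P₀ i Ti'⟩) :=
                CStep.schd ctS'
              obtain ⟨Xf', Pf', run2, hret2⟩ := ih _ _ _ _ rfl step2
              have cond1 : ∀ k ∉ I, Function.update P₀ i Ti' k =
                  (⟨Gi, Function.update c.R i Ri', Function.update c.P i Ti'⟩ :
                    Config Val C Reg Addr TID).P k := by
                intro k hk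
                by_cases hki : k = i
                · subst hki; simp
                · show Function.update P₀ i Ti' k = Function.update c.P i Ti' k
                  rw [Function.update_of_ne hki, Function.update_of_ne hki]
                  exact h01 k hk
              have cond2 : ∀ k ∈ I,
                  ((⟨Gi, Function.update c.R i Ri', Function.update c.P i Ti'⟩ :
                    Config Val C Reg Addr TID).P k = .ret ∧
                      Function.update P₀ i Ti' k = .ret) ∨
                  ∃ T, (⟨Gi, Function.update c.R i Ri', Function.update c.P i Ti'⟩ :
                    Config Val C Reg Addr TID).P k = .seq (.sync I) T ∧
                      Function.update P₀ i Ti' k = T := by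
                intro k hk
                have hki : k ≠ i := fun e => hiI (e ▸ hk)
                show (Function.update c.P i Ti' k = .ret ∧
                    Function.update P₀ i Ti' k = .ret) ∨
                  ∃ T, Function.update c.P i Ti' k = .seq (.sync I) T ∧
                    Function.update P₀ i Ti' k = T
                rw [Function.update_of_ne hki, Function.update_of_ne hki]
                exact h02 k hk
              have step1 : CStep op κ
                  (.ok X' ⟨Gi, Function.update c.R i Ri', Function.update c.P i Ti'⟩)
                  (.ok (syncMem I X') ⟨Gi, Function.update c.R i Ri',
                    Function.update P₀ i Ti'⟩) :=
                CStep.sync cond1 cond2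
              exact ⟨Xf', Pf', Relation.ReflTransGen.head step1 run2, hret2⟩
          | @sync _ _ J Q hq1 hq2 =>
              by_cases hIJ : I = J
              · subst hIJ
                have hPQ : P₀ = Q := by
                  funext k
                  by_cases hk : k ∈ I
                  · rcases h02 k hk with ⟨h1, h2⟩ | ⟨T, hT, h2⟩
                    · rcases hq2 k hk with ⟨_, h3⟩ | ⟨T', hT', _⟩
                      · rw [h2, h3]
                      · rw [h1] at hT'; cases hT'
                    · rcases hq2 k hk with ⟨h3, _⟩ | ⟨T', hT', h3⟩
                      · rw [h3] at hT; cases hT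
                      · rw [hT] at hT'
                        injection hT' with _ hTT
                        rw [h2, h3, hTT]
                  · rw [h01 k hk, hq1 k hk]
                rw [← hPQ]
                exact ⟨Xf, Pf, tail, hret⟩
              · classical
                have hIJret : ∀ k, k ∈ I → k ∈ J →
                    c.P k = .ret ∧ P₀ k = .ret ∧ Q k = .ret := by
                  intro k hkI hkJ
                  rcases h02 k hkI with ⟨h1, h2⟩ | ⟨T, hT, h2⟩
                  · rcases hq2 k hkJ with ⟨_, h3⟩ | ⟨T', hT', _⟩
                    · exact ⟨h1, h2, h3⟩
                    · rw [h1] at hT'; cases hT'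
                  · rcases hq2 k hkJ with ⟨h3, _⟩ | ⟨T', hT', h3⟩
                    · rw [h3] at hT; cases hT
                    · rw [hT] at hT'
                      injection hT' with hs _
                      injection hs with hIJ'
                      exact absurd hIJ' hIJ
                set Pd : TID → ThreadProg C Reg Addr TID :=
                  fun k => if k ∈ J then Q k else P₀ k with hPd
                have condA1 : ∀ k ∉ J, Pd k =
                    (⟨c.G, c.R, P₀⟩ : Config Val C Reg Addr TID).P k := by
                  intro k hk
                  show Pd k = P₀ k
                  simp [hPd, hk]
                have condA2 : ∀ k ∈ J,
                    ((⟨c.G, c.R, P₀⟩ : Config Val C Reg Addr TID).P k = .ret ∧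
                      Pd k = .ret) ∨
                    ∃ T, (⟨c.G, c.R, P₀⟩ : Config Val C Reg Addr TID).P k =
                      .seq (.sync J) T ∧ Pd k = T := by
                  intro k hk
                  have hPdk : Pd k = Q k := by simp [hPd, hk]
                  show (P₀ k = .ret ∧ Pd k = .ret) ∨ ∃ T, P₀ k = _ ∧ Pd k = T
                  by_cases hkI : k ∈ I
                  · obtain ⟨_, h2, h3⟩ := hIJret k hkI hk
                    exact Or.inl ⟨h2, by rw [hPdk, h3]⟩
                  · rw [h01 k hkI, hPdk]
                    exact hq2 k hk
                have stepA : CStep op κ (.ok (syncMem I X) ⟨c.G, c.R, P₀⟩)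
                    (.ok (syncMem J (syncMem I X)) ⟨c.G, c.R, Pd⟩) :=
                  CStep.sync condA1 condA2
                obtain ⟨Xf', Pf', run2, hret2⟩ := ih _ _ _ _ rfl stepA
                have condB1 : ∀ k ∉ I, Pd k =
                    (⟨c.G, c.R, Q⟩ : Config Val C Reg Addr TID).P k := by
                  intro k hk
                  show Pd k = Q k
                  by_cases hkJ : k ∈ J
                  · simp [hPd, hkJ]
                  · simp only [hPd, if_neg hkJ]
                    rw [h01 k hk, hq1 k hkJ]
                have condB2 : ∀ k ∈ I,
                    ((⟨c.G, c.R, Q⟩ : Config Val C Reg Addr TID).P k = .ret ∧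
                      Pd k = .ret) ∨
                    ∃ T, (⟨c.G, c.R, Q⟩ : Config Val C Reg Addr TID).P k =
                      .seq (.sync I) T ∧ Pd k = T := by
                  intro k hk
                  show (Q k = .ret ∧ Pd k = .ret) ∨ ∃ T, Q k = _ ∧ Pd k = T
                  by_cases hkJ : k ∈ J
                  · obtain ⟨_, h2, h3⟩ := hIJret k hk hkJ
                    exact Or.inl ⟨h3, by simp [hPd, hkJ, h3]⟩
                  · have hPdk : Pd k = P₀ k := by simp [hPd, hkJ]
                    rw [hq1 k hkJ, hPdk]
                    exact h02 k hk
                have stepB : CStep op κ (.ok (syncMem J X) ⟨c.G, c.R, Q⟩)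
                    (.ok (syncMem I (syncMem J X)) ⟨c.G, c.R, Pd⟩) :=
                  CStep.sync condB1 condB2
                rw [syncMem_comm] at stepB
                exact ⟨Xf', Pf', Relation.ReflTransGen.head stepB run2, hret2⟩

end Aux6
end Volta
namespace Volta

set_option linter.unusedSectionVars false
set_option maxHeartbeats 1000000

section Aux7

variable {Val C Reg Addr TID : Type}
variable [DecidableEq Reg] [DecidableEq Addr] [DecidableEq TID]
variable (op : Val → Val → Val) (κ : C → Val)

lemma accept {X : MemEvs Addr TID} {c : Config Val C Reg Addr TID}
    {Gf : Addr → Val} {Rf : TID → Reg → Val}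
    (hg : ∃ Xf Pf, CSteps op κ (.ok X c) (.ok Xf ⟨Gf, Rf, Pf⟩) ∧ ∀ i, Pf i = .ret)
    {c' : Config Val C Reg Addr TID} (hs : Step op κ c c') :
    ∃ X', CStep op κ (.ok X c) (.ok X' c') := by
  obtain ⟨Xf, Pf, run, hret⟩ := hg
  cases hs with
  | schd t =>
      rename_i i G' R' T'
      generalize hPi : c.P i = Ti at t
      cases t with
      | const =>
          exact ⟨X, CStep.schd (by rw [hPi]; exact CTStep.const)⟩
      | binop =>
          exact ⟨X, CStep.schd (by rw [hPi]; exact CTStep.binop)⟩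
      | copy =>
          exact ⟨X, CStep.schd (by rw [hPi]; exact CTStep.copy)⟩
      | @read r g T =>
          have hw : noRacingWr i ((X g).2) :=
            (keyF op κ hret run X c rfl i g).1 (Or.inl ⟨r, T', hPi⟩)
          exact ⟨_, CStep.schd (by rw [hPi]; exact CTStep.read hw)⟩
      | @write g r T =>
          have hF := keyF op κ hret run X c rfl i g
          have hw : noRacingWr i ((X g).2) := hF.1 (Or.inr ⟨r, T', hPi⟩)
          have hr : noRacingRd i ((X g).1) := hF.2 ⟨r, T', hPi⟩
          exact ⟨_, CStep.schd (by rw [hPi]; exact CTStep.write hr hw)⟩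
  | sync h1 h2 => exact ⟨_, CStep.sync h1 h2⟩

lemma ret_stable {Gf : Addr → Val} {Rf : TID → Reg → Val} {Xf : MemEvs Addr TID}
    {Pf : TID → ThreadProg C Reg Addr TID} :
    ∀ {s}, CSteps op κ s (.ok Xf ⟨Gf, Rf, Pf⟩) →
    ∀ X c, s = .ok X c → (∀ i, c.P i = .ret) → c.G = Gf ∧ c.R = Rf := by
  intro s h
  induction h using Relation.ReflTransGen.head_induction_on with
  | refl =>
      intro X c heq _
      cases heq
      exact ⟨rfl, rfl⟩
  | head step tail ih =>
      intro X c heq hr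
      subst heq
      cases step with
      | schdBad ct => exact absurd (csteps_err op κ tail) (by simp)
      | @schd _ _ i X₁ G₁ R₁ T₁ ct =>
          rw [hr i] at ct
          cases ct
      | @sync _ _ I P' h1 h2 =>
          have hr' : ∀ k, P' k = .ret := by
            intro k
            by_cases hk : k ∈ I
            · rcases h2 k hk with ⟨_, e⟩ | ⟨T, hT, _⟩
              · exact e
              · rw [hr k] at hT; cases hT
            · exact (h1 k hk).trans (hr k)
          exact ih (syncMem I X) ⟨c.G, c.R, P'⟩ rfl hr'

lemma determinism {Gf : Addr → Val} {Rf : TID → Reg → Val} :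
    ∀ {c c₂ : Config Val C Reg Addr TID}, Steps op κ c c₂ →
    (∀ i, c₂.P i = .ret) →
    (∃ X Xf Pf, CSteps op κ (.ok X c) (.ok Xf ⟨Gf, Rf, Pf⟩) ∧ ∀ i, Pf i = .ret) →
    c₂.G = Gf ∧ c₂.R = Rf := by
  intro c c₂ h
  induction h using Relation.ReflTransGen.head_induction_on with
  | refl =>
      rintro hr ⟨X, Xf, Pf, run, hret⟩
      exact ret_stable op κ run _ _ rfl hr
  | head step tail ih =>
      rintro hr ⟨X, Xf, Pf, run, hret⟩
      obtain ⟨X', cs⟩ := accept op κ ⟨Xf, Pf, run, hret⟩ step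
      obtain ⟨Xf', Pf', run', hret'⟩ := cstep_good op κ hret run _ _ _ _ rfl cs
      exact ih hr ⟨X', Xf', Pf', run', hret'⟩

end Aux7
end Volta
namespace Volta

set_option linter.unusedSectionVars false
set_option maxHeartbeats 1000000

section Aux8

variable {Val W C Reg Addr TID : Type}
variable [DecidableEq Reg] [DecidableEq Addr] [DecidableEq TID]
variable (op : Val → Val → Val) (κ : C → Val)
variable (op' : W → W → W) (κ' : C → W) (φ : Val → W)

/-- Apply a map `φ` pointwise to a configuration. -/
def mapConfig (c : Config Val C Reg Addr TID) : Config W C Reg Addr TID :=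
  ⟨φ ∘ c.G, fun k => φ ∘ c.R k, c.P⟩

lemma mapR_update (Rr : TID → Reg → Val) (i : TID) (R' : Reg → Val) :
    (fun k => φ ∘ Function.update Rr i R' k) =
      Function.update (fun k => φ ∘ Rr k) i (φ ∘ R') := by
  funext k
  by_cases hk : k = i
  · subst hk; simp
  · simp [Function.update_of_ne hk]

lemma ctstep_map (hop : ∀ a b, φ (op a b) = op' (φ a) (φ b))
    (hκ : ∀ cc, φ (κ cc) = κ' cc)
    {i : TID} {X : MemEvs Addr TID} {G : Addr → Val} {R : Reg → Val}
    {T : ThreadProg C Reg Addr TID} {X₁ G₁ R₁ T₁}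
    (h : CTStep op κ i X G R T (.ok X₁ G₁ R₁ T₁)) :
    CTStep op' κ' i X (φ ∘ G) (φ ∘ R) T (.ok X₁ (φ ∘ G₁) (φ ∘ R₁) T₁) := by
  cases h with
  | const =>
      rw [Function.comp_update, hκ]
      exact CTStep.const
  | binop =>
      rw [Function.comp_update, hop]
      exact CTStep.binop
  | copy =>
      rw [Function.comp_update]
      exact CTStep.copy
  | read hw =>
      rw [Function.comp_update]
      exact CTStep.read hw
  | write hr hw =>
      rw [Function.comp_update]
      exact CTStep.write hr hw

lemma cstep_map (hop : ∀ a b, φ (op a b) = op' (φ a) (φ b))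
    (hκ : ∀ cc, φ (κ cc) = κ' cc)
    {X X' : MemEvs Addr TID} {c c' : Config Val C Reg Addr TID}
    (h : CStep op κ (.ok X c) (.ok X' c')) :
    CStep op' κ' (.ok X (mapConfig φ c)) (.ok X' (mapConfig φ c')) := by
  cases h with
  | @schd _ _ i XX G' R' T' ct =>
      have ct' := ctstep_map op κ op' κ' φ hop hκ ct
      have out : CStep op' κ' (.ok X (mapConfig φ c))
          (.ok X' ⟨φ ∘ G',
            Function.update (fun k => φ ∘ c.R k) i (φ ∘ R'),
            Function.update c.P i T'⟩) := CStep.schd ct'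
      have hc : (⟨φ ∘ G', Function.update (fun k => φ ∘ c.R k) i (φ ∘ R'),
          Function.update c.P i T'⟩ : Config W C Reg Addr TID) =
          mapConfig φ ⟨G', Function.update c.R i R', Function.update c.P i T'⟩ := by
        show _ = (⟨φ ∘ G', fun k => φ ∘ Function.update c.R i R' k,
          Function.update c.P i T'⟩ : Config W C Reg Addr TID)
        rw [mapR_update]
      rw [hc] at out
      exact out
  | sync h1 h2 =>
      exact CStep.sync (c := mapConfig φ c) h1 h2

lemma csteps_map (hop : ∀ a b, φ (op a b) = op' (φ a) (φ b))
    (hκ : ∀ cc, φ (κ cc) = κ' cc) :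
    ∀ {s t : CConfig Val C Reg Addr TID}, CSteps op κ s t →
    ∀ X c X' c', s = .ok X c → t = .ok X' c' →
    CSteps op' κ' (.ok X (mapConfig φ c)) (.ok X' (mapConfig φ c')) := by
  intro s t h
  induction h with
  | refl =>
      intro X c X' c' h1 h2
      rw [h1] at h2
      injection h2 with e1 e2
      subst e1; subst e2
      exact Relation.ReflTransGen.refl
  | tail hab hbc ih =>
      intro X c X' c' h1 h2
      subst h1; subst h2
      cases hbc with
      | @schd Xb cb i XX G' R' T' ct =>
          exact Relation.ReflTransGen.tail (ih X c Xb cb rfl rfl)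
            (cstep_map op κ op' κ' φ hop hκ (CStep.schd ct))
      | @sync Xb cb I P' h1' h2' =>
          exact Relation.ReflTransGen.tail (ih X c Xb cb rfl rfl)
            (cstep_map op κ op' κ' φ hop hκ (CStep.sync h1' h2'))

end Aux8
end Volta
namespace Volta

/-- **Completeness of Equivalence Checking**: for all programs `P, Q` and
symbolic contexts `G, R` over `𝕍`, if `(X_∅, G, R, P) ↪↓ (G_P, R_P)`,
`(X_∅, G, R, Q) ↪↓ (G_Q, R_Q)`, and the symbolic outputs differ, then,
assuming that for all distinct `a, b ∈ 𝕍` there is a map `φ : (𝕍, ⊕) → (ℝ, ⊕)`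
with `φ(a) ≠ φ(b)`, there exists a map `φ` such that whenever
`(φ(G), φ(R), P) ↓ (G_P', R_P')` and `(φ(G), φ(R), Q) ↓ (G_Q', R_Q')`, one has
`G_P' ≠ G_Q'` or `R_P' ≠ R_Q'`. -/
theorem completeness_of_equivalence_checking
    {V C Reg Addr TID : Type} [DecidableEq Reg] [DecidableEq Addr] [DecidableEq TID]
    (opV : V → V → V) (κV : C → V) (opR : ℝ → ℝ → ℝ) (κR : C → ℝ)
    (t₀ : TID)
    (G : Addr → V) (R : TID → Reg → V)
    (P Q : TID → ThreadProg C Reg Addr TID)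
    (hsep : ∀ a b : V, a ≠ b → ∃ φ : V → ℝ,
      (∀ v₁ v₂ : V, φ (opV v₁ v₂) = opR (φ v₁) (φ v₂)) ∧
      (∀ c : C, φ (κV c) = κR c) ∧ φ a ≠ φ b)
    (G_P G_Q : Addr → V) (R_P R_Q : TID → Reg → V)
    (hP : CTerminates opV κV (emptyMemEvs t₀) ⟨G, R, P⟩ G_P R_P)
    (hQ : CTerminates opV κV (emptyMemEvs t₀) ⟨G, R, Q⟩ G_Q R_Q)
    (hne : G_P ≠ G_Q ∨ R_P ≠ R_Q) :
    ∃ φ : V → ℝ,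
      (∀ v₁ v₂ : V, φ (opV v₁ v₂) = opR (φ v₁) (φ v₂)) ∧
      (∀ c : C, φ (κV c) = κR c) ∧
      ∀ (G_P' G_Q' : Addr → ℝ) (R_P' R_Q' : TID → Reg → ℝ),
        Terminates opR κR ⟨fun g => φ (G g), fun i r => φ (R i r), P⟩ G_P' R_P' →
        Terminates opR κR ⟨fun g => φ (G g), fun i r => φ (R i r), Q⟩ G_Q' R_Q' →
        (G_P' ≠ G_Q' ∨ R_P' ≠ R_Q') := by
  classical
  have key : ∀ (φ : V → ℝ), (∀ v₁ v₂ : V, φ (opV v₁ v₂) = opR (φ v₁) (φ v₂)) →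
      (∀ c : C, φ (κV c) = κR c) →
      ∀ (P₀ : TID → ThreadProg C Reg Addr TID) (G₀ : Addr → V) (R₀ : TID → Reg → V),
      CTerminates opV κV (emptyMemEvs t₀) ⟨G, R, P₀⟩ G₀ R₀ →
      ∀ (G' : Addr → ℝ) (R' : TID → Reg → ℝ),
      Terminates opR κR ⟨fun g => φ (G g), fun i r => φ (R i r), P₀⟩ G' R' →
      G' = (fun g => φ (G₀ g)) ∧ R' = fun i r => φ (R₀ i r) := by
    intro φ hop hκ P₀ G₀ R₀ hct G' R' hterm
    obtain ⟨Xf, Pf, run, hretf⟩ := hct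
    obtain ⟨P'', steps, hret2⟩ := hterm
    have runφ := csteps_map opV κV opR κR φ hop hκ run
      (emptyMemEvs t₀) ⟨G, R, P₀⟩ Xf ⟨G₀, R₀, Pf⟩ rfl rfl
    have hdet := determinism opR κR (Gf := fun g => φ (G₀ g))
      (Rf := fun i r => φ (R₀ i r)) steps hret2
      ⟨emptyMemEvs t₀, Xf, Pf, runφ, hretf⟩
    exact ⟨hdet.1, hdet.2⟩
  rcases hne with hG | hR
  · obtain ⟨a, ha⟩ : ∃ a, G_P a ≠ G_Q a := by
      by_contra hcon
      push_neg at hcon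
      exact hG (funext hcon)
    obtain ⟨φ, hop, hκ, hab⟩ := hsep _ _ ha
    refine ⟨φ, hop, hκ, ?_⟩
    intro G_P' G_Q' R_P' R_Q' hTP hTQ
    obtain ⟨e1, _⟩ := key φ hop hκ P G_P R_P hP G_P' R_P' hTP
    obtain ⟨e2, _⟩ := key φ hop hκ Q G_Q R_Q hQ G_Q' R_Q' hTQ
    left
    rw [e1, e2]
    intro heq
    exact hab (congrFun heq a)
  · obtain ⟨i0, r0, ha⟩ : ∃ i r, R_P i r ≠ R_Q i r := by
      by_contra hcon
      push_neg at hcon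
      exact hR (funext fun i => funext fun r => hcon i r)
    obtain ⟨φ, hop, hκ, hab⟩ := hsep _ _ ha
    refine ⟨φ, hop, hκ, ?_⟩
    intro G_P' G_Q' R_P' R_Q' hTP hTQ
    obtain ⟨_, e1⟩ := key φ hop hκ P G_P R_P hP G_P' R_P' hTP
    obtain ⟨_, e2⟩ := key φ hop hκ Q G_Q R_Q hQ G_Q' R_Q' hTQ
    right
    rw [e1, e2]
    intro heq
    exact hab (congrFun (congrFun heq i0) r0)


end Volta
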